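/- Let ρ, σ be density matrices on an n-partite Hilbert space with p(z) = (1/2^n) ∑_S (-1)^(|S ∩ supp(z)|) Tr(ρ_S σ_S). Then p(0) = 1 if and only if ρ = σ and ρ is a pure product state (i.e., ρ = ⊗_{i=1}^n |ψ_i⟩⟨ψ_i| for some unit vectors ψ_i). -/

import Mathlib

open Finset ComplexOrder

noncomputable def ptrace {n : ℕ} (d : Fin n → ℕ) (S : Finset (Fin n))
    (ρ : Matrix ((i : Fin n) → Fin (d i)) ((i : Fin n) → Fin (d i)) ℂ) :
    Matrix ((i : {j : Fin n // j ∈ S}) → Fin (d i.1))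
           ((i : {j : Fin n // j ∈ S}) → Fin (d i.1)) ℂ :=
  fun x y => ∑ z : (i : {j : Fin n // j ∉ S}) → Fin (d i.1),
    ρ (fun i => if h : i ∈ S then x ⟨i, h⟩ else z ⟨i, h⟩)
      (fun i => if h : i ∈ S then y ⟨i, h⟩ else z ⟨i, h⟩)

/-- `Tr(ρ_S σ_S)`, the overlap of the reduced states on `S`. -/
noncomputable def overlap {n : ℕ} (d : Fin n → ℕ) (S : Finset (Fin n))
    (ρ σ : Matrix ((i : Fin n) → Fin (d i)) ((i : Fin n) → Fin (d i)) ℂ) : ℂ :=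
  (ptrace d S ρ * ptrace d S σ).trace

/-- A density matrix: positive semidefinite with unit trace. -/
def IsDensity {m : Type*} [Fintype m] [DecidableEq m] (ρ : Matrix m m ℂ) : Prop :=
  ρ.PosSemidef ∧ ρ.trace = 1

set_option maxHeartbeats 1000000 in
section
namespace SwapAux
open Matrix

variable {m : Type*} [Fintype m] [DecidableEq m]

lemma cancel_star_mul (U : Matrix.unitaryGroup m ℂ) (X : Matrix m m ℂ) :
    (star U.1) * (U.1 * X) = X := by
  rw [← Matrix.mul_assoc, Matrix.UnitaryGroup.star_mul_self, Matrix.one_mul]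

lemma herm_trace {A : Matrix m m ℂ} (hA : A.IsHermitian) :
    A.trace = ∑ i, (hA.eigenvalues i : ℂ) := by
  have hsp : A = hA.eigenvectorUnitary.1 * Matrix.diagonal (RCLike.ofReal ∘ hA.eigenvalues) * star hA.eigenvectorUnitary.1 := hA.spectral_theorem
  conv_lhs => rw [hsp]
  rw [Matrix.trace_mul_cycle, Matrix.UnitaryGroup.star_mul_self,
    Matrix.one_mul, Matrix.trace_diagonal]
  simp [Function.comp]

lemma herm_trace_sq {A : Matrix m m ℂ} (hA : A.IsHermitian) :
    (A * A).trace = ∑ i, (hA.eigenvalues i : ℂ) ^ 2 := by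
  set U := hA.eigenvectorUnitary
  set D : Matrix m m ℂ := Matrix.diagonal (RCLike.ofReal ∘ hA.eigenvalues) with hD
  have h : A = U.1 * D * star U.1 := hA.spectral_theorem
  have h2 : A * A = U.1 * (D * D) * star U.1 := by
    rw [h]; simp only [Matrix.mul_assoc]
    rw [cancel_star_mul]
  rw [h2, Matrix.trace_mul_cycle, Matrix.UnitaryGroup.star_mul_self,
    Matrix.one_mul, hD, Matrix.diagonal_mul_diagonal, Matrix.trace_diagonal]
  simp [Function.comp, sq]

lemma density_eigen {A : Matrix m m ℂ} (hA : IsDensity A) :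
    (∀ i, 0 ≤ hA.1.1.eigenvalues i) ∧ (∑ i, hA.1.1.eigenvalues i) = 1 := by
  refine ⟨fun i => hA.1.eigenvalues_nonneg i, ?_⟩
  have h1 : (∑ i, (hA.1.1.eigenvalues i : ℂ)) = 1 := (herm_trace hA.1.1).symm.trans hA.2
  have h2 : ((∑ i, hA.1.1.eigenvalues i : ℝ) : ℂ) = ((1 : ℝ) : ℂ) := by push_cast; exact h1
  exact Complex.ofReal_inj.mp h2

lemma density_trace_sq_le {A : Matrix m m ℂ} (hA : IsDensity A) :
    ∃ r : ℝ, (A * A).trace = (r : ℂ) ∧ r ≤ 1 := by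
  obtain ⟨hnn, hsum⟩ := density_eigen hA
  refine ⟨∑ i, hA.1.1.eigenvalues i ^ 2, ?_, ?_⟩
  · rw [herm_trace_sq hA.1.1]; push_cast; rfl
  · calc ∑ i, hA.1.1.eigenvalues i ^ 2 ≤ ∑ i, hA.1.1.eigenvalues i := by
          refine Finset.sum_le_sum fun i _ => ?_
          have hle : hA.1.1.eigenvalues i ≤ 1 := by
            rw [← hsum]
            exact Finset.single_le_sum (fun j _ => hnn j) (Finset.mem_univ i)
          nlinarith [hnn i]
        _ = 1 := hsum

lemma trace_mul_herm_real {A B : Matrix m m ℂ} (hA : A.IsHermitian) (hB : B.IsHermitian) :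
    (starRingEnd ℂ) ((A * B).trace) = (A * B).trace := by
  have : ((A * B)ᴴ).trace = (starRingEnd ℂ) ((A * B).trace) := by
    rw [Matrix.trace_conjTranspose]; rfl
  rw [← this, Matrix.conjTranspose_mul, hA.eq, hB.eq, Matrix.trace_mul_comm]

lemma trace_conj_mul_self (M : Matrix m m ℂ) :
    (Mᴴ * M).trace = ∑ j, ∑ i, (Complex.normSq (M i j) : ℂ) := by
  rw [Matrix.trace]
  refine Finset.sum_congr rfl fun j _ => ?_
  rw [Matrix.diag, Matrix.mul_apply]
  refine Finset.sum_congr rfl fun i _ => ?_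
  rw [Matrix.conjTranspose_apply, Complex.normSq_eq_conj_mul_self, mul_comm]
  simp [RCLike.star_def, mul_comm]


lemma expand_sub_sq' {A B : Matrix m m ℂ} (hA : A.IsHermitian) (hB : B.IsHermitian) :
    ((A - B)ᴴ * (A - B)).trace
      = (A * A).trace + (B * B).trace - 2 * (A * B).trace := by
  have hH : (A - B)ᴴ = A - B := (hA.sub hB).eq
  rw [hH]
  have hexp : (A - B) * (A - B) = A * A - A * B - B * A + B * B := by noncomm_ring
  rw [hexp]
  simp only [Matrix.trace_add, Matrix.trace_sub]
  rw [Matrix.trace_mul_comm B A]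
  ring

lemma trace_conj_mul_self_re_nonneg (M : Matrix m m ℂ) :
    0 ≤ (Mᴴ * M).trace.re ∧ (Mᴴ * M).trace.im = 0 := by
  rw [trace_conj_mul_self]
  constructor
  · simp only [Complex.re_sum]
    refine Finset.sum_nonneg fun j _ => Finset.sum_nonneg fun i _ => ?_
    simp [Complex.normSq_nonneg]
  · simp [Complex.im_sum]

lemma density_overlap_bound {A B : Matrix m m ℂ} (hA : IsDensity A) (hB : IsDensity B) :
    (A * B).trace.im = 0 ∧ (A * B).trace.re ≤ 1 := by
  have hre := trace_mul_herm_real hA.1.1 hB.1.1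
  have him : (A * B).trace.im = 0 := by
    have := congrArg Complex.im hre
    simp only [Complex.conj_im] at this
    linarith
  refine ⟨him, ?_⟩
  obtain ⟨r, hr, hr1⟩ := density_trace_sq_le hA
  obtain ⟨s, hs, hs1⟩ := density_trace_sq_le hB
  have key := expand_sub_sq' hA.1.1 hB.1.1
  have h0 := (trace_conj_mul_self_re_nonneg (A - B)).1
  rw [key] at h0
  simp only [Complex.sub_re, Complex.add_re, hr, hs, Complex.mul_re, Complex.ofReal_re] at h0
  norm_num at h0
  linarith [h0]

lemma density_eq_of_overlap_one {A B : Matrix m m ℂ} (hA : IsDensity A) (hB : IsDensity B)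
    (h : (A * B).trace = 1) : A = B := by
  obtain ⟨r, hr, hr1⟩ := density_trace_sq_le hA
  obtain ⟨s, hs, hs1⟩ := density_trace_sq_le hB
  have key := expand_sub_sq' hA.1.1 hB.1.1
  rw [h, hr, hs] at key
  have h0 := trace_conj_mul_self_re_nonneg (A - B)
  have hre : ((A - B)ᴴ * (A - B)).trace.re = 0 := by
    refine le_antisymm ?_ h0.1
    have : ((A - B)ᴴ * (A - B)).trace.re = r + s - 2 := by
      rw [key]; simp
    rw [this]; linarith
  -- entries vanish
  have hzero : ∀ x y, (A - B) x y = 0 := by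
    have hsumle := trace_conj_mul_self (A - B)
    have : ∑ j, ∑ i, Complex.normSq ((A - B) i j) = 0 := by
      have := congrArg Complex.re hsumle
      rw [hre] at this
      simpa [Complex.re_sum] using this.symm
    intro x y
    have hj := (Finset.sum_eq_zero_iff_of_nonneg
      (fun j _ => Finset.sum_nonneg fun i _ => Complex.normSq_nonneg _)).mp this y (Finset.mem_univ y)
    have hi := (Finset.sum_eq_zero_iff_of_nonneg
      (fun i _ => Complex.normSq_nonneg _)).mp hj x (Finset.mem_univ x)
    exact Complex.normSq_eq_zero.mp hi
  ext x y
  have := hzero x y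
  simpa [sub_eq_zero] using this

lemma density_pure {A : Matrix m m ℂ} (hA : IsDensity A) (h : (A * A).trace = 1) :
    ∃ v : m → ℂ, (∑ a, (starRingEnd ℂ) (v a) * v a = 1) ∧
      A = Matrix.of fun x y => v x * (starRingEnd ℂ) (v y) := by
  obtain ⟨hnn, hsum⟩ := density_eigen hA
  set lam := hA.1.1.eigenvalues with hlam
  have hsq : (∑ i, lam i ^ 2) = 1 := by
    have h1 : (∑ i, (lam i : ℂ) ^ 2) = 1 := (herm_trace_sq hA.1.1).symm.trans h
    have h2 : ((∑ i, lam i ^ 2 : ℝ) : ℂ) = ((1 : ℝ) : ℂ) := by push_cast; exact h1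
    exact Complex.ofReal_inj.mp h2
  have hle1 : ∀ i, lam i ≤ 1 := fun i =>
    hsum ▸ Finset.single_le_sum (fun j _ => hnn j) (Finset.mem_univ i)
  have h01 : ∀ i, lam i = 0 ∨ lam i = 1 := by
    have hz : ∑ i, (lam i - lam i ^ 2) = 0 := by
      rw [Finset.sum_sub_distrib, hsum, hsq, sub_self]
    have hzero := (Finset.sum_eq_zero_iff_of_nonneg
      (fun i _ => by nlinarith [hnn i, hle1 i])).mp hz
    intro i
    have hi := hzero i (Finset.mem_univ i)
    have : lam i * (1 - lam i) = 0 := by ring_nf; ring_nf at hi; linarith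
    rcases mul_eq_zero.mp this with h' | h'
    · exact Or.inl h'
    · exact Or.inr (by linarith)
  obtain ⟨i0, hi0⟩ : ∃ i, lam i = 1 := by
    by_contra hc; push_neg at hc
    have hall : ∀ i ∈ Finset.univ, lam i = 0 := fun i _ => (h01 i).resolve_right (hc i)
    rw [Finset.sum_eq_zero hall] at hsum
    norm_num at hsum
  have hrest : ∀ j, j ≠ i0 → lam j = 0 := by
    intro j hj
    by_contra hc
    have hj1 : lam j = 1 := (h01 j).resolve_left hc
    have hsub : ({i0, j} : Finset m) ⊆ Finset.univ := Finset.subset_univ _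
    have h2 : ∑ i ∈ ({i0, j} : Finset m), lam i ≤ ∑ i, lam i :=
      Finset.sum_le_sum_of_subset_of_nonneg hsub (fun i _ _ => hnn i)
    rw [Finset.sum_pair (Ne.symm hj), hi0, hj1, hsum] at h2
    norm_num at h2
  set U := hA.1.1.eigenvectorUnitary with hU
  refine ⟨fun x => U.1 x i0, ?_, ?_⟩
  · have h1 : ((star U.1) * U.1) i0 i0 = (1 : Matrix m m ℂ) i0 i0 := by
      rw [Matrix.UnitaryGroup.star_mul_self]
    rw [Matrix.mul_apply, Matrix.one_apply_eq] at h1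
    simpa [Matrix.star_apply, RCLike.star_def] using h1
  · have key : (hA.1.1.eigenvectorUnitary.1 * Matrix.diagonal (RCLike.ofReal ∘ lam)
        * star hA.1.1.eigenvectorUnitary.1 : Matrix m m ℂ)
        = Matrix.of fun x y => hA.1.1.eigenvectorUnitary.1 x i0
            * (starRingEnd ℂ) (hA.1.1.eigenvectorUnitary.1 y i0) := by
      ext x y
      rw [Matrix.mul_apply, Finset.sum_eq_single i0]
      · rw [Matrix.mul_diagonal, Matrix.star_apply]
        simp [Function.comp, RCLike.star_def, hi0]
      · intro k _ hk
        rw [Matrix.mul_diagonal]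
        simp [Function.comp, hrest k hk]
      · intro hcon
        exact absurd (Finset.mem_univ i0) hcon
    exact hA.1.1.spectral_theorem.trans key

lemma factor_of_pure_marginal {α β : Type*} [Fintype α] [Fintype β]
    (φ : α → β → ℂ) (v : α → ℂ)
    (hv : ∑ a, (starRingEnd ℂ) (v a) * v a = 1)
    (hM : ∀ a a', ∑ b, φ a b * (starRingEnd ℂ) (φ a' b) = v a * (starRingEnd ℂ) (v a')) :
    ∀ a b, φ a b = v a * ∑ a', (starRingEnd ℂ) (v a') * φ a' b := by
  classical
  set c : β → ℂ := fun b => ∑ a', (starRingEnd ℂ) (v a') * φ a' b with hc_def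
  have hvv : ∑ a, v a * (starRingEnd ℂ) (v a) = 1 := by
    rw [← hv]; exact Finset.sum_congr rfl fun a _ => mul_comm _ _
  have hcconj : ∀ b, (starRingEnd ℂ) (c b) = ∑ a, v a * (starRingEnd ℂ) (φ a b) := by
    intro b
    rw [hc_def, map_sum]
    exact Finset.sum_congr rfl fun a _ => by rw [_root_.map_mul, Complex.conj_conj]
  have hK : ∑ b, (starRingEnd ℂ) (c b) * c b = 1 := by
    have step1 : ∀ b, (starRingEnd ℂ) (c b) * c b
        = ∑ a, ∑ a', (v a * (starRingEnd ℂ) (φ a b)) * ((starRingEnd ℂ) (v a') * φ a' b) := by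
      intro b
      rw [hcconj b, hc_def, Finset.sum_mul_sum]
    rw [Finset.sum_congr rfl fun b _ => step1 b, Finset.sum_comm]
    have inner : ∀ a, ∑ b, ∑ a', (v a * (starRingEnd ℂ) (φ a b)) * ((starRingEnd ℂ) (v a') * φ a' b)
        = ∑ a', (v a * (starRingEnd ℂ) (v a)) * ((starRingEnd ℂ) (v a') * v a') := by
      intro a
      rw [Finset.sum_comm]
      refine Finset.sum_congr rfl fun a' _ => ?_
      have : ∑ b, (v a * (starRingEnd ℂ) (φ a b)) * ((starRingEnd ℂ) (v a') * φ a' b)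
          = (v a * (starRingEnd ℂ) (v a')) * ∑ b, φ a' b * (starRingEnd ℂ) (φ a b) := by
        rw [Finset.mul_sum]
        exact Finset.sum_congr rfl fun b _ => by ring
      rw [this, hM a' a]
      ring
    rw [Finset.sum_congr rfl fun a _ => inner a, ← Finset.sum_mul_sum, hvv, hv, one_mul]
  -- expansion of the square
  have expand : ∀ a b, (φ a b - v a * c b) * (starRingEnd ℂ) (φ a b - v a * c b)
      = φ a b * (starRingEnd ℂ) (φ a b)
        - ((starRingEnd ℂ) (v a) * φ a b) * (starRingEnd ℂ) (c b)
        - (v a * (starRingEnd ℂ) (φ a b)) * c b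
        + (v a * (starRingEnd ℂ) (v a)) * (c b * (starRingEnd ℂ) (c b)) := by
    intro a b
    rw [map_sub, _root_.map_mul]
    ring
  have T1 : ∑ a, ∑ b, φ a b * (starRingEnd ℂ) (φ a b) = 1 := by
    rw [Finset.sum_congr rfl fun a _ => hM a a]; exact hvv
  have T2 : ∑ a, ∑ b, ((starRingEnd ℂ) (v a) * φ a b) * (starRingEnd ℂ) (c b) = 1 := by
    rw [Finset.sum_comm]
    have : ∀ b, ∑ a, ((starRingEnd ℂ) (v a) * φ a b) * (starRingEnd ℂ) (c b)
        = c b * (starRingEnd ℂ) (c b) := by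
      intro b
      rw [← Finset.sum_mul]
    rw [Finset.sum_congr rfl fun b _ => this b, ← hK]
    exact Finset.sum_congr rfl fun b _ => mul_comm _ _
  have T3 : ∑ a, ∑ b, (v a * (starRingEnd ℂ) (φ a b)) * c b = 1 := by
    rw [Finset.sum_comm]
    have : ∀ b, ∑ a, (v a * (starRingEnd ℂ) (φ a b)) * c b
        = (starRingEnd ℂ) (c b) * c b := by
      intro b
      rw [← Finset.sum_mul, ← hcconj b]
    rw [Finset.sum_congr rfl fun b _ => this b, hK]
  have T4 : ∑ a, ∑ b, (v a * (starRingEnd ℂ) (v a)) * (c b * (starRingEnd ℂ) (c b)) = 1 := by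
    rw [← Finset.sum_mul_sum, hvv, one_mul, ← hK]
    exact Finset.sum_congr rfl fun b _ => mul_comm _ _
  have hE : ∑ a, ∑ b, (φ a b - v a * c b) * (starRingEnd ℂ) (φ a b - v a * c b) = 0 := by
    rw [Finset.sum_congr rfl fun a _ => Finset.sum_congr rfl fun b _ => expand a b]
    simp only [Finset.sum_add_distrib, Finset.sum_sub_distrib]
    rw [T1, T2, T3, T4]
    ring
  have hreal : ∑ a, ∑ b, Complex.normSq (φ a b - v a * c b) = 0 := by
    have : ((∑ a, ∑ b, Complex.normSq (φ a b - v a * c b) : ℝ) : ℂ) = ((0 : ℝ) : ℂ) := by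
      push_cast
      rw [← hE]
      refine Finset.sum_congr rfl fun a _ => Finset.sum_congr rfl fun b _ => ?_
      rw [Complex.mul_conj]
    exact Complex.ofReal_inj.mp this
  intro a b
  have h1 := (Finset.sum_eq_zero_iff_of_nonneg
    (fun a _ => Finset.sum_nonneg fun b _ => Complex.normSq_nonneg _)).mp hreal a (Finset.mem_univ a)
  have h2 := (Finset.sum_eq_zero_iff_of_nonneg
    (fun b _ => Complex.normSq_nonneg _)).mp h1 b (Finset.mem_univ b)
  have := Complex.normSq_eq_zero.mp h2
  rw [sub_eq_zero] at this
  rw [this]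

variable {n : ℕ} {d : Fin n → ℕ}

/-- merge of a configuration on `S` and one on the complement -/
def mrg (S : Finset (Fin n)) (x : (i : {j : Fin n // j ∈ S}) → Fin (d i.1))
    (z : (i : {j : Fin n // j ∉ S}) → Fin (d i.1)) : (i : Fin n) → Fin (d i) :=
  fun i => if h : i ∈ S then x ⟨i, h⟩ else z ⟨i, h⟩

lemma mrg_self (S : Finset (Fin n)) (x : (i : Fin n) → Fin (d i)) :
    mrg S (fun j => x j.1) (fun j => x j.1) = x := by
  funext i
  unfold mrg
  split_ifs <;> rfl

/-- the equivalence between split and full configurations -/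
def splitEquiv (S : Finset (Fin n)) :
    (((i : {j : Fin n // j ∈ S}) → Fin (d i.1)) × ((i : {j : Fin n // j ∉ S}) → Fin (d i.1)))
      ≃ ((i : Fin n) → Fin (d i)) where
  toFun p := mrg S p.1 p.2
  invFun w := ⟨fun j => w j.1, fun j => w j.1⟩
  left_inv p := by
    refine Prod.ext ?_ ?_ <;> funext j
    · show (mrg S p.1 p.2) j.1 = p.1 j
      unfold mrg; rw [dif_pos j.2]
    · show (mrg S p.1 p.2) j.1 = p.2 j
      unfold mrg; rw [dif_neg j.2]
  right_inv w := mrg_self S w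

lemma ptrace_eq_sum_submatrix (S : Finset (Fin n))
    (ρ : Matrix ((i : Fin n) → Fin (d i)) ((i : Fin n) → Fin (d i)) ℂ) :
    ptrace d S ρ = ∑ z : (i : {j : Fin n // j ∉ S}) → Fin (d i.1),
      ρ.submatrix (fun x => mrg S x z) (fun x => mrg S x z) := by
  ext x y
  rw [Matrix.sum_apply]
  rfl

lemma posSemidef_sum {m : Type*} [Fintype m] [DecidableEq m] {ι : Type*} (s : Finset ι)
    (f : ι → Matrix m m ℂ) (h : ∀ i ∈ s, (f i).PosSemidef) :
    (∑ i ∈ s, f i).PosSemidef := by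
  induction s using Finset.cons_induction with
  | empty => rw [Finset.sum_empty]; exact Matrix.PosSemidef.zero
  | cons a s ha ih =>
    rw [Finset.sum_cons]
    exact ((h a (Finset.mem_cons_self a s)).add
      (ih fun i hi => h i (Finset.mem_cons_of_mem hi)))

lemma ptrace_posSemidef (S : Finset (Fin n))
    {ρ : Matrix ((i : Fin n) → Fin (d i)) ((i : Fin n) → Fin (d i)) ℂ}
    (hρ : ρ.PosSemidef) : (ptrace d S ρ).PosSemidef := by
  rw [ptrace_eq_sum_submatrix]
  exact posSemidef_sum _ _ fun z _ => hρ.submatrix _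

lemma ptrace_trace (S : Finset (Fin n))
    (ρ : Matrix ((i : Fin n) → Fin (d i)) ((i : Fin n) → Fin (d i)) ℂ) :
    (ptrace d S ρ).trace = ρ.trace := by
  rw [Matrix.trace]
  have : ∀ x, (ptrace d S ρ).diag x
      = ∑ z : (i : {j : Fin n // j ∉ S}) → Fin (d i.1), ρ (mrg S x z) (mrg S x z) := by
    intro x; rfl
  rw [Finset.sum_congr rfl fun x _ => this x]
  rw [Matrix.trace]
  rw [← Equiv.sum_comp (splitEquiv S) (fun w => ρ.diag w), Fintype.sum_prod_type]
  rfl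

lemma ptrace_isDensity (S : Finset (Fin n))
    {ρ : Matrix ((i : Fin n) → Fin (d i)) ((i : Fin n) → Fin (d i)) ℂ}
    (hρ : IsDensity ρ) : IsDensity (ptrace d S ρ) :=
  ⟨ptrace_posSemidef S hρ.1, (ptrace_trace S ρ).trans hρ.2⟩

lemma ptrace_univ_apply (ρ : Matrix ((i : Fin n) → Fin (d i)) ((i : Fin n) → Fin (d i)) ℂ)
    (x y : (i : {j : Fin n // j ∈ (Finset.univ : Finset (Fin n))}) → Fin (d i.1)) :
    ptrace d Finset.univ ρ x y
      = ρ (fun i => x ⟨i, Finset.mem_univ i⟩) (fun i => y ⟨i, Finset.mem_univ i⟩) := by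
  haveI : IsEmpty {j : Fin n // j ∉ (Finset.univ : Finset (Fin n))} :=
    ⟨fun j => j.2 (Finset.mem_univ j.1)⟩
  show (∑ z : (i : {j : Fin n // j ∉ (Finset.univ : Finset (Fin n))}) → Fin (d i.1),
    ρ (fun i => if h : i ∈ Finset.univ then x ⟨i, h⟩ else z ⟨i, h⟩)
      (fun i => if h : i ∈ Finset.univ then y ⟨i, h⟩ else z ⟨i, h⟩)) = _
  rw [Fintype.sum_unique]
  exact congrArg₂ ρ (funext fun i => dif_pos (Finset.mem_univ i))
    (funext fun i => dif_pos (Finset.mem_univ i))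

lemma eq_of_ptrace_univ_eq {ρ σ : Matrix ((i : Fin n) → Fin (d i)) ((i : Fin n) → Fin (d i)) ℂ}
    (h : ptrace d Finset.univ ρ = ptrace d Finset.univ σ) : ρ = σ := by
  ext w w'
  have h2 := congrFun (congrFun h (fun j => w j.1)) (fun j => w' j.1)
  rw [ptrace_univ_apply, ptrace_univ_apply] at h2
  exact h2

lemma rho_pure {ρ : Matrix ((i : Fin n) → Fin (d i)) ((i : Fin n) → Fin (d i)) ℂ}
    (hρ : IsDensity ρ)
    (h : ((ptrace d Finset.univ ρ) * (ptrace d Finset.univ ρ)).trace = 1) :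
    ∃ φ : ((i : Fin n) → Fin (d i)) → ℂ,
      ρ = Matrix.of fun w w' => φ w * (starRingEnd ℂ) (φ w') := by
  obtain ⟨v, hv, hvv⟩ := density_pure (ptrace_isDensity _ hρ) h
  refine ⟨fun w => v (fun j => w j.1), ?_⟩
  ext w w'
  have h2 := congrFun (congrFun hvv (fun j => w j.1)) (fun j => w' j.1)
  rw [ptrace_univ_apply] at h2
  exact h2

def single (i : Fin n) (a : Fin (d i)) :
    (j : {k : Fin n // k ∈ ({i} : Finset (Fin n))}) → Fin (d j.1) :=
  fun j => Fin.cast (congrArg d (Finset.mem_singleton.mp j.2).symm) a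

lemma single_eval (i : Fin n) (a : Fin (d i)) :
    single (d := d) i a ⟨i, Finset.mem_singleton_self i⟩ = a := by
  apply Fin.ext; simp [single]

lemma single_lift (i : Fin n) (x : (j : Fin n) → Fin (d j)) :
    single i (x i) = fun j : {k : Fin n // k ∈ ({i} : Finset (Fin n))} => x j.1 := by
  funext j
  obtain ⟨j', hj'⟩ := j
  have e : j' = i := Finset.mem_singleton.mp hj'
  subst e
  apply Fin.ext; simp [single]

lemma single_bijective (i : Fin n) : Function.Bijective (single (d := d) i) := by
  refine Function.bijective_iff_has_inverse.mpr
    ⟨fun x' => x' ⟨i, Finset.mem_singleton_self i⟩, fun a => single_eval i a, fun x' => ?_⟩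
  funext j
  obtain ⟨j', hj'⟩ := j
  have e : j' = i := Finset.mem_singleton.mp hj'
  subst e
  apply Fin.ext; simp [single]

lemma mrg_single_update (i : Fin n) (a : Fin (d i)) (x : (j : Fin n) → Fin (d j)) :
    mrg ({i} : Finset (Fin n)) (single i a) (fun j => x j.1) = Function.update x i a := by
  funext j
  unfold mrg
  by_cases hj : j ∈ ({i} : Finset (Fin n))
  · rw [dif_pos hj]
    have e : j = i := Finset.mem_singleton.mp hj
    subst e
    rw [Function.update_self]
    apply Fin.ext; simp [single]
  · rw [dif_neg hj, Function.update_of_ne (Finset.notMem_singleton.mp hj)]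

lemma site_identity {ρ : Matrix ((i : Fin n) → Fin (d i)) ((i : Fin n) → Fin (d i)) ℂ}
    (hρ : IsDensity ρ) (φ : ((i : Fin n) → Fin (d i)) → ℂ)
    (hρφ : ρ = Matrix.of fun w w' => φ w * (starRingEnd ℂ) (φ w'))
    (i : Fin n)
    (h1 : ((ptrace d {i} ρ) * (ptrace d {i} ρ)).trace = 1) :
    ∃ ψ : Fin (d i) → ℂ, (∑ a, (starRingEnd ℂ) (ψ a) * ψ a = 1) ∧
      ∀ x, φ x = ψ (x i) * ∑ a, (starRingEnd ℂ) (ψ a) * φ (Function.update x i a) := by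
  obtain ⟨v, hv, hvv⟩ := density_pure (ptrace_isDensity {i} hρ) h1
  have hM : ∀ x' y', ∑ z : (j : {k : Fin n // k ∉ ({i} : Finset (Fin n))}) → Fin (d j.1),
      φ (mrg {i} x' z) * (starRingEnd ℂ) (φ (mrg {i} y' z)) = v x' * (starRingEnd ℂ) (v y') := by
    intro x' y'
    have h2 := congrFun (congrFun hvv x') y'
    calc ∑ z, φ (mrg {i} x' z) * (starRingEnd ℂ) (φ (mrg {i} y' z))
        = ptrace d {i} ρ x' y' := by
          show _ = ∑ z : (j : {k : Fin n // k ∉ ({i} : Finset (Fin n))}) → Fin (d j.1),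
            ρ (mrg {i} x' z) (mrg {i} y' z)
          exact Finset.sum_congr rfl fun z _ => by rw [hρφ]; rfl
      _ = v x' * (starRingEnd ℂ) (v y') := h2
  have key := factor_of_pure_marginal (fun x' z => φ (mrg {i} x' z)) v hv hM
  refine ⟨fun a => v (single i a), ?_, ?_⟩
  · exact (Fintype.sum_bijective (single i) (single_bijective i) _ _ fun a => rfl).trans hv
  · intro x
    have hx := key (fun j => x j.1) (fun j => x j.1)
    beta_reduce at hx
    rw [mrg_self] at hx
    refine hx.trans ?_
    rw [← single_lift i x]
    congr 1
    refine (Fintype.sum_bijective (single i) (single_bijective i) _ _ fun a => ?_).symm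
    rw [mrg_single_update]

lemma kernel_induction {φ : ((i : Fin n) → Fin (d i)) → ℂ} {ψ : (i : Fin n) → Fin (d i) → ℂ}
    (hsite : ∀ i x, φ x = ψ i (x i) * ∑ a, (starRingEnd ℂ) (ψ i a) * φ (Function.update x i a))
    (T : Finset (Fin n)) :
    ∀ x, φ x = ∑ w : (i : Fin n) → Fin (d i),
      ((∏ i ∈ T, ψ i (x i) * (starRingEnd ℂ) (ψ i (w i)))
        * ∏ i ∈ Tᶜ, (if w i = x i then (1:ℂ) else 0)) * φ w := by
  induction T using Finset.induction with
  | empty =>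
    intro x
    rw [Finset.sum_eq_single x]
    · simp
    · intro w _ hw
      have hne : ∃ i, w i ≠ x i := by
        by_contra hc; push_neg at hc; exact hw (funext hc)
      obtain ⟨i, hi⟩ := hne
      rw [Finset.prod_eq_zero (Finset.mem_compl.mpr (Finset.notMem_empty i))
        (if_neg hi : (if w i = x i then (1:ℂ) else 0) = 0)]
      ring
    · intro hcon; exact absurd (Finset.mem_univ x) hcon
  | @insert i T hiT ih =>
    intro x
    have hprod1 : ∀ (a : Fin (d i)) (w : (i : Fin n) → Fin (d i)),
        (∏ j ∈ T, ψ j (Function.update x i a j) * (starRingEnd ℂ) (ψ j (w j)))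
          = ∏ j ∈ T, ψ j (x j) * (starRingEnd ℂ) (ψ j (w j)) :=
      fun a w => Finset.prod_congr rfl fun j hj => by
        rw [Function.update_of_ne (ne_of_mem_of_not_mem hj hiT)]
    have hprod2 : ∀ (a : Fin (d i)) (w : (i : Fin n) → Fin (d i)),
        (∏ j ∈ Tᶜ, if w j = Function.update x i a j then (1:ℂ) else 0)
          = (if w i = a then (1:ℂ) else 0)
            * ∏ j ∈ Tᶜ.erase i, (if w j = x j then (1:ℂ) else 0) := by
      intro a w
      rw [← Finset.mul_prod_erase Tᶜ _ (Finset.mem_compl.mpr hiT)]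
      congr 1
      · rw [Function.update_self]
      · exact Finset.prod_congr rfl fun j hj => by
          rw [Function.update_of_ne (Finset.ne_of_mem_erase hj)]
    calc φ x = ψ i (x i) * ∑ a, (starRingEnd ℂ) (ψ i a) * φ (Function.update x i a) :=
          hsite i x
      _ = ψ i (x i) * ∑ a, (starRingEnd ℂ) (ψ i a) * ∑ w : (i : Fin n) → Fin (d i),
            ((∏ j ∈ T, ψ j (Function.update x i a j) * (starRingEnd ℂ) (ψ j (w j)))
              * ∏ j ∈ Tᶜ, (if w j = Function.update x i a j then (1:ℂ) else 0)) * φ w := by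
          congr 1
          exact Finset.sum_congr rfl fun a _ => by rw [← ih (Function.update x i a)]
      _ = ψ i (x i) * ∑ w : (i : Fin n) → Fin (d i), ∑ a, (starRingEnd ℂ) (ψ i a) *
            (((∏ j ∈ T, ψ j (Function.update x i a j) * (starRingEnd ℂ) (ψ j (w j)))
              * ∏ j ∈ Tᶜ, (if w j = Function.update x i a j then (1:ℂ) else 0)) * φ w) := by
          congr 1
          rw [Finset.sum_congr rfl fun a _ => Finset.mul_sum _ _ _]
          exact Finset.sum_comm
      _ = ψ i (x i) * ∑ w : (i : Fin n) → Fin (d i), ∑ a, (starRingEnd ℂ) (ψ i a) *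
            (((∏ j ∈ T, ψ j (x j) * (starRingEnd ℂ) (ψ j (w j)))
              * ((if w i = a then (1:ℂ) else 0)
                * ∏ j ∈ Tᶜ.erase i, (if w j = x j then (1:ℂ) else 0))) * φ w) := by
          congr 1
          exact Finset.sum_congr rfl fun w _ => Finset.sum_congr rfl fun a _ => by
            rw [hprod1 a w, hprod2 a w]
      _ = ∑ w : (i : Fin n) → Fin (d i),
            ((∏ j ∈ insert i T, ψ j (x j) * (starRingEnd ℂ) (ψ j (w j)))
              * ∏ j ∈ (insert i T)ᶜ, (if w j = x j then (1:ℂ) else 0)) * φ w := by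
          rw [Finset.mul_sum]
          refine Finset.sum_congr rfl fun w _ => ?_
          rw [Finset.sum_eq_single (w i)]
          · rw [if_pos rfl, Finset.prod_insert hiT, Finset.compl_insert]
            ring
          · intro a _ ha
            rw [if_neg fun h => ha h.symm]
            ring
          · intro hcon; exact absurd (Finset.mem_univ _) hcon

lemma product_of_sites {φ : ((i : Fin n) → Fin (d i)) → ℂ} {ψ : (i : Fin n) → Fin (d i) → ℂ}
    (hsite : ∀ i x, φ x = ψ i (x i) * ∑ a, (starRingEnd ℂ) (ψ i a) * φ (Function.update x i a))
    (hψ : ∀ i, ∑ a, (starRingEnd ℂ) (ψ i a) * ψ i a = 1)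
    (hnorm : ∑ x : (i : Fin n) → Fin (d i), φ x * (starRingEnd ℂ) (φ x) = 1) :
    ∀ x y, φ x * (starRingEnd ℂ) (φ y)
      = ∏ i, ψ i (x i) * (starRingEnd ℂ) (ψ i (y i)) := by
  have hker := kernel_induction hsite Finset.univ
  have hfact : ∀ x, φ x = (∏ i, ψ i (x i)) * ∑ w : (i : Fin n) → Fin (d i),
      (∏ i, (starRingEnd ℂ) (ψ i (w i))) * φ w := by
    intro x
    rw [hker x, Finset.mul_sum]
    refine Finset.sum_congr rfl fun w _ => ?_
    rw [Finset.compl_univ, Finset.prod_empty, Finset.prod_mul_distrib]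
    ring
  set C := ∑ w : (i : Fin n) → Fin (d i), (∏ i, (starRingEnd ℂ) (ψ i (w i))) * φ w with hC
  have hsum1 : ∑ x : (i : Fin n) → Fin (d i), ∏ i, (ψ i (x i) * (starRingEnd ℂ) (ψ i (x i))) = 1 := by
    have hpu := Finset.prod_univ_sum (fun i : Fin n => (Finset.univ : Finset (Fin (d i))))
      (fun i a => ψ i a * (starRingEnd ℂ) (ψ i a))
    rw [Fintype.piFinset_univ] at hpu
    rw [← hpu]
    refine Finset.prod_eq_one fun i _ => ?_
    rw [← hψ i]
    exact Finset.sum_congr rfl fun a _ => mul_comm _ _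
  have hCC : C * (starRingEnd ℂ) C = 1 := by
    have h1 : ∑ x, φ x * (starRingEnd ℂ) (φ x)
        = (C * (starRingEnd ℂ) C) * ∑ x : (i : Fin n) → Fin (d i),
            ∏ i, (ψ i (x i) * (starRingEnd ℂ) (ψ i (x i))) := by
      rw [Finset.mul_sum]
      refine Finset.sum_congr rfl fun x _ => ?_
      rw [hfact x, _root_.map_mul, map_prod, Finset.prod_mul_distrib]
      ring
    rw [hsum1, mul_one] at h1
    exact h1.symm.trans hnorm
  intro x y
  rw [hfact x, hfact y, _root_.map_mul, map_prod, Finset.prod_mul_distrib]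
  calc (∏ i, ψ i (x i)) * C * ((∏ i, (starRingEnd ℂ) (ψ i (y i))) * (starRingEnd ℂ) C)
      = (C * (starRingEnd ℂ) C) * ((∏ i, ψ i (x i)) * ∏ i, (starRingEnd ℂ) (ψ i (y i))) := by
        ring
    _ = (∏ i, ψ i (x i)) * ∏ i, (starRingEnd ℂ) (ψ i (y i)) := by rw [hCC, one_mul]

lemma ptrace_product (S : Finset (Fin n)) (ψ : (i : Fin n) → Fin (d i) → ℂ)
    (hψ : ∀ i, ∑ a, (starRingEnd ℂ) (ψ i a) * ψ i a = 1) :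
    ptrace d S (Matrix.of fun x y => ∏ i, ψ i (x i) * (starRingEnd ℂ) (ψ i (y i)))
      = Matrix.of fun x y => ∏ j : {k : Fin n // k ∈ S},
          (ψ j.1 (x j) * (starRingEnd ℂ) (ψ j.1 (y j))) := by
  ext x y
  show (∑ z : (j : {k : Fin n // k ∉ S}) → Fin (d j.1),
      (Matrix.of fun x y => ∏ i, ψ i (x i) * (starRingEnd ℂ) (ψ i (y i)))
        (mrg S x z) (mrg S y z)) = _
  have hsplit : ∀ z : (j : {k : Fin n // k ∉ S}) → Fin (d j.1),
      (∏ i, ψ i (mrg S x z i) * (starRingEnd ℂ) (ψ i (mrg S y z i)))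
        = (∏ j : {k : Fin n // k ∈ S}, (ψ j.1 (x j) * (starRingEnd ℂ) (ψ j.1 (y j))))
          * ∏ j : {k : Fin n // k ∉ S}, (ψ j.1 (z j) * (starRingEnd ℂ) (ψ j.1 (z j))) := by
    intro z
    set F : Fin n → ℂ := fun i => if h : i ∈ S then ψ i (x ⟨i, h⟩) * (starRingEnd ℂ) (ψ i (y ⟨i, h⟩))
      else ψ i (z ⟨i, h⟩) * (starRingEnd ℂ) (ψ i (z ⟨i, h⟩)) with hF
    have e1 : (∏ i, ψ i (mrg S x z i) * (starRingEnd ℂ) (ψ i (mrg S y z i))) = ∏ i, F i := by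
      refine Finset.prod_congr rfl fun i _ => ?_
      simp only [hF]
      unfold mrg
      by_cases h : i ∈ S
      · rw [dif_pos h, dif_pos h, dif_pos h]
      · rw [dif_neg h, dif_neg h, dif_neg h]
    have e2 : (∏ i ∈ S, F i) = ∏ j : {k : Fin n // k ∈ S},
        (ψ j.1 (x j) * (starRingEnd ℂ) (ψ j.1 (y j))) := by
      rw [Finset.prod_subtype S (fun i => Iff.rfl) F]
      exact Finset.prod_congr rfl fun j _ => by simp only [hF]; rw [dif_pos j.2]
    have e3 : (∏ i ∈ Sᶜ, F i) = ∏ j : {k : Fin n // k ∉ S},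
        (ψ j.1 (z j) * (starRingEnd ℂ) (ψ j.1 (z j))) := by
      rw [Finset.prod_subtype Sᶜ (fun i => Finset.mem_compl) F]
      exact Finset.prod_congr rfl fun j _ => by simp only [hF]; rw [dif_neg j.2]
    rw [e1, ← Finset.prod_mul_prod_compl S F, e2, e3]
  calc (∑ z : (j : {k : Fin n // k ∉ S}) → Fin (d j.1),
      (Matrix.of fun x y => ∏ i, ψ i (x i) * (starRingEnd ℂ) (ψ i (y i)))
        (mrg S x z) (mrg S y z))
      = ∑ z : (j : {k : Fin n // k ∉ S}) → Fin (d j.1),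
          (∏ j : {k : Fin n // k ∈ S}, (ψ j.1 (x j) * (starRingEnd ℂ) (ψ j.1 (y j))))
          * ∏ j : {k : Fin n // k ∉ S}, (ψ j.1 (z j) * (starRingEnd ℂ) (ψ j.1 (z j))) :=
        Finset.sum_congr rfl fun z _ => hsplit z
    _ = (∏ j : {k : Fin n // k ∈ S}, (ψ j.1 (x j) * (starRingEnd ℂ) (ψ j.1 (y j))))
          * ∑ z : (j : {k : Fin n // k ∉ S}) → Fin (d j.1),
            ∏ j : {k : Fin n // k ∉ S}, (ψ j.1 (z j) * (starRingEnd ℂ) (ψ j.1 (z j))) := by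
        rw [Finset.mul_sum]
    _ = ∏ j : {k : Fin n // k ∈ S}, (ψ j.1 (x j) * (starRingEnd ℂ) (ψ j.1 (y j))) := by
        have : ∑ z : (j : {k : Fin n // k ∉ S}) → Fin (d j.1),
            ∏ j : {k : Fin n // k ∉ S}, (ψ j.1 (z j) * (starRingEnd ℂ) (ψ j.1 (z j))) = 1 := by
          have hpu := Finset.prod_univ_sum
            (fun j : {k : Fin n // k ∉ S} => (Finset.univ : Finset (Fin (d j.1))))
            (fun j a => ψ j.1 a * (starRingEnd ℂ) (ψ j.1 a))
          rw [Fintype.piFinset_univ] at hpu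
          rw [← hpu]
          refine Finset.prod_eq_one fun j _ => ?_
          rw [← hψ j.1]
          exact Finset.sum_congr rfl fun a _ => mul_comm _ _
        rw [this, mul_one]

lemma trace_pure_sq {m : Type*} [Fintype m] [DecidableEq m] (w : m → ℂ)
    (hw : ∑ x, w x * (starRingEnd ℂ) (w x) = 1) :
    ((Matrix.of fun x y => w x * (starRingEnd ℂ) (w y))
      * (Matrix.of fun x y => w x * (starRingEnd ℂ) (w y))).trace = 1 := by
  rw [Matrix.trace]
  have hdiag : ∀ x, ((Matrix.of fun x y => w x * (starRingEnd ℂ) (w y))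
      * (Matrix.of fun x y => w x * (starRingEnd ℂ) (w y))).diag x
      = (w x * (starRingEnd ℂ) (w x)) * ∑ y, w y * (starRingEnd ℂ) (w y) := by
    intro x
    show (∑ y, (w x * (starRingEnd ℂ) (w y)) * (w y * (starRingEnd ℂ) (w x))) = _
    rw [Finset.mul_sum]
    exact Finset.sum_congr rfl fun y _ => by ring
  rw [Finset.sum_congr rfl fun x _ => by rw [hdiag x, hw, mul_one]]
  exact hw

lemma overlap_product (S : Finset (Fin n)) (ψ : (i : Fin n) → Fin (d i) → ℂ)
    (hψ : ∀ i, ∑ a, (starRingEnd ℂ) (ψ i a) * ψ i a = 1) :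
    overlap d S (Matrix.of fun x y => ∏ i, ψ i (x i) * (starRingEnd ℂ) (ψ i (y i)))
        (Matrix.of fun x y => ∏ i, ψ i (x i) * (starRingEnd ℂ) (ψ i (y i))) = 1 := by
  unfold overlap
  rw [ptrace_product S ψ hψ]
  have hform : (Matrix.of fun x y => ∏ j : {k : Fin n // k ∈ S},
        (ψ j.1 (x j) * (starRingEnd ℂ) (ψ j.1 (y j))))
      = Matrix.of fun x y : (j : {k : Fin n // k ∈ S}) → Fin (d j.1) =>
          (∏ j : {k : Fin n // k ∈ S}, ψ j.1 (x j))
          * (starRingEnd ℂ) (∏ j : {k : Fin n // k ∈ S}, ψ j.1 (y j)) := by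
    ext x y
    show (∏ j : {k : Fin n // k ∈ S}, (ψ j.1 (x j) * (starRingEnd ℂ) (ψ j.1 (y j)))) = _
    rw [Finset.prod_mul_distrib]
    congr 1
    exact (map_prod _ _ _).symm
  rw [hform]
  refine trace_pure_sq _ ?_
  have hpu := Finset.prod_univ_sum
    (fun j : {k : Fin n // k ∈ S} => (Finset.univ : Finset (Fin (d j.1))))
    (fun j a => ψ j.1 a * (starRingEnd ℂ) (ψ j.1 a))
  rw [Fintype.piFinset_univ] at hpu
  calc ∑ x : (j : {k : Fin n // k ∈ S}) → Fin (d j.1),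
        (∏ j : {k : Fin n // k ∈ S}, ψ j.1 (x j))
          * (starRingEnd ℂ) (∏ j : {k : Fin n // k ∈ S}, ψ j.1 (x j))
      = ∑ x : (j : {k : Fin n // k ∈ S}) → Fin (d j.1),
          ∏ j : {k : Fin n // k ∈ S}, (ψ j.1 (x j) * (starRingEnd ℂ) (ψ j.1 (x j))) := by
        refine Finset.sum_congr rfl fun x _ => ?_
        rw [map_prod, ← Finset.prod_mul_distrib]
    _ = ∏ j : {k : Fin n // k ∈ S}, ∑ a, (ψ j.1 a * (starRingEnd ℂ) (ψ j.1 a)) := hpu.symm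
    _ = 1 := by
        refine Finset.prod_eq_one fun j _ => ?_
        rw [← hψ j.1]
        exact Finset.sum_congr rfl fun a _ => mul_comm _ _

lemma all_eq_one {ι : Type*} [Fintype ι] (f : ι → ℝ) (hle : ∀ i, f i ≤ 1)
    (hsum : ∑ i, f i = (Fintype.card ι : ℝ)) : ∀ i, f i = 1 := by
  by_contra hc
  push_neg at hc
  obtain ⟨i, hi⟩ := hc
  have hlt : f i < 1 := lt_of_le_of_ne (hle i) hi
  have h2 : ∑ j, f j < ∑ _j : ι, (1 : ℝ) :=
    Finset.sum_lt_sum (fun j _ => hle j) ⟨i, Finset.mem_univ i, hlt⟩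
  rw [Finset.sum_const, nsmul_eq_mul, mul_one, Finset.card_univ, hsum] at h2
  exact absurd h2 (lt_irrefl _)

end SwapAux

end

/-- In the `n`-qubit parallelized SWAP test of `ρ` and `σ`,
`p(0) = (1/2^n) ∑_{S ⊆ [n]} Tr(ρ_S σ_S) = 1` if and only if `ρ = σ` and `ρ` is a
pure product state `⊗ᵢ |ψᵢ⟩⟨ψᵢ|`. -/
theorem swap_test_p_zero_iff_product {n : ℕ} (d : Fin n → ℕ)
    (ρ σ : Matrix ((i : Fin n) → Fin (d i)) ((i : Fin n) → Fin (d i)) ℂ)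
    (hρ : IsDensity ρ) (hσ : IsDensity σ) :
    ((1 / 2 ^ n : ℂ) * ∑ S : Finset (Fin n), overlap d S ρ σ) = 1 ↔
      (ρ = σ ∧ ∃ ψ : (i : Fin n) → Fin (d i) → ℂ,
        (∀ i, ∑ a, (starRingEnd ℂ) (ψ i a) * ψ i a = 1) ∧
        ρ = Matrix.of fun x y => ∏ i, ψ i (x i) * (starRingEnd ℂ) (ψ i (y i))) := by
  have h2n : ((2 : ℂ)) ^ n ≠ 0 := pow_ne_zero _ two_ne_zero
  constructor
  · intro h
    have hsum : ∑ S : Finset (Fin n), overlap d S ρ σ = (2 : ℂ) ^ n := by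
      have h2 : ((2 : ℂ) ^ n) * ((1 / 2 ^ n : ℂ) * ∑ S : Finset (Fin n), overlap d S ρ σ)
          = (2 : ℂ) ^ n * 1 := by rw [h]
      rw [mul_one] at h2
      rw [← h2]
      field_simp
    have hbound : ∀ S : Finset (Fin n),
        (overlap d S ρ σ).im = 0 ∧ (overlap d S ρ σ).re ≤ 1 := fun S =>
      SwapAux.density_overlap_bound (SwapAux.ptrace_isDensity S hρ)
        (SwapAux.ptrace_isDensity S hσ)
    have hre : ∑ S : Finset (Fin n), (overlap d S ρ σ).re
        = (Fintype.card (Finset (Fin n)) : ℝ) := by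
      have h3 := congrArg Complex.re hsum
      rw [Complex.re_sum] at h3
      rw [h3, Fintype.card_finset, Fintype.card_fin]
      have h4 : ((2 : ℂ)) ^ n = (((2 : ℝ) ^ n : ℝ) : ℂ) := by push_cast; ring
      rw [h4, Complex.ofReal_re]
      push_cast
      ring
    have hone := SwapAux.all_eq_one (fun S => (overlap d S ρ σ).re)
      (fun S => (hbound S).2) hre
    have hover : ∀ S : Finset (Fin n), overlap d S ρ σ = 1 := fun S =>
      Complex.ext (by simpa using hone S) (by simpa using (hbound S).1)
    have hρσ : ρ = σ := SwapAux.eq_of_ptrace_univ_eq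
      (SwapAux.density_eq_of_overlap_one (SwapAux.ptrace_isDensity _ hρ)
        (SwapAux.ptrace_isDensity _ hσ) (hover Finset.univ))
    obtain rfl := hρσ
    obtain ⟨φ, hφ⟩ := SwapAux.rho_pure hρ (hover Finset.univ)
    have hsid : ∀ i : Fin n, ∃ ψi : Fin (d i) → ℂ,
        (∑ a, (starRingEnd ℂ) (ψi a) * ψi a = 1) ∧
        ∀ x, φ x = ψi (x i) * ∑ a, (starRingEnd ℂ) (ψi a) * φ (Function.update x i a) :=
      fun i => SwapAux.site_identity hρ φ hφ i (hover {i})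
    choose ψ hψ1 hψ2 using hsid
    have hnorm : ∑ x : (i : Fin n) → Fin (d i), φ x * (starRingEnd ℂ) (φ x) = 1 := by
      have ht := hρ.2
      rw [hφ, Matrix.trace] at ht
      exact ht
    have hprod := SwapAux.product_of_sites hψ2 hψ1 hnorm
    refine ⟨rfl, ψ, hψ1, ?_⟩
    rw [hφ]
    ext x y
    exact hprod x y
  · rintro ⟨hρσ, ψ, hψ1, hψ2⟩
    have hover : ∀ S : Finset (Fin n), overlap d S ρ σ = 1 := by
      intro S
      rw [← hρσ, hψ2]
      exact SwapAux.overlap_product S ψ hψ1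
    rw [Finset.sum_congr rfl fun S _ => hover S, Finset.sum_const, nsmul_eq_mul, mul_one,
      Finset.card_univ, Fintype.card_finset, Fintype.card_fin]
    push_cast
    field_simp
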